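/- The function x ↦ log(x · cos x / sin x) is strictly concave on the open interval (0, π/2). -/

import Mathlib

open Real

lemma key_ineq {t : ℝ} (h0 : 0 < t) (h1 : t < π) : t ^ 2 * Real.cos t < Real.sin t ^ 2 := by
  have hs : 0 < Real.sin t := Real.sin_pos_of_pos_of_lt_pi h0 h1
  rcases le_or_gt (Real.cos t) 0 with hc | hc
  · nlinarith
  · -- t < π/2
    have ht2 : t < π / 2 := by
      by_contra h
      push_neg at h
      exact absurd (Real.cos_nonpos_of_pi_div_two_le_of_le h (by linarith [Real.pi_pos])) (not_le.mpr hc)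
    have h2 : (0:ℝ) < t / 2 := by linarith
    have h3 : t / 2 < π / 2 := by linarith
    have hcos2 : 0 < Real.cos (t / 2) := Real.cos_pos_of_mem_Ioo ⟨by linarith, h3⟩
    have htan : t / 2 < Real.tan (t / 2) := Real.lt_tan h2 h3
    rw [Real.tan_eq_sin_div_cos] at htan
    have hsin2 : t / 2 * Real.cos (t / 2) < Real.sin (t / 2) :=
      (lt_div_iff₀ hcos2).mp htan
    have hsin_eq : Real.sin t = 2 * Real.sin (t / 2) * Real.cos (t / 2) := by
      rw [← Real.sin_two_mul]; ring_nf
    have hcos_eq : Real.cos t = 2 * Real.cos (t / 2) ^ 2 - 1 := by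
      rw [← Real.cos_two_mul]; ring_nf
    have hst : t * Real.cos (t / 2) ^ 2 < Real.sin t := by
      rw [hsin_eq]; nlinarith
    nlinarith [sq_nonneg (Real.cos (t / 2) ^ 2 - 1), sq_nonneg (Real.cos (t/2)), mul_pos h0 (mul_pos hcos2 hcos2)]

theorem log_xcot_strictConcave :
    StrictConcaveOn ℝ (Set.Ioo 0 (π / 2))
      (fun x : ℝ => Real.log (x * Real.cos x / Real.sin x)) := by
  set S : Set ℝ := Set.Ioo 0 (π / 2) with hS
  have hopen : IsOpen S := isOpen_Ioo
  have hmem : ∀ x ∈ S, 0 < x ∧ 0 < Real.cos x ∧ 0 < Real.sin x := by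
    intro x hx
    exact ⟨hx.1, Real.cos_pos_of_mem_Ioo ⟨by linarith [hx.1, Real.pi_pos], hx.2⟩,
      Real.sin_pos_of_pos_of_lt_pi hx.1 (by linarith [Real.pi_pos, hx.2])⟩
  set g : ℝ → ℝ := fun x => Real.log x + Real.log (Real.cos x) - Real.log (Real.sin x) with hg
  set g1 : ℝ → ℝ := fun x => 1 / x - Real.sin x / Real.cos x - Real.cos x / Real.sin x with hg1
  have hfg : ∀ x ∈ S, Real.log (x * Real.cos x / Real.sin x) = g x := by
    intro x hx
    obtain ⟨hx0, hc, hs⟩ := hmem x hx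
    rw [hg, Real.log_div (by positivity) (ne_of_gt hs), Real.log_mul (ne_of_gt hx0) (ne_of_gt hc)]
  have hd1 : ∀ x ∈ S, HasDerivAt g (g1 x) x := by
    intro x hx
    obtain ⟨hx0, hc, hs⟩ := hmem x hx
    have h1 := Real.hasDerivAt_log (ne_of_gt hx0)
    have h2 := (Real.hasDerivAt_log (ne_of_gt hc)).comp x (Real.hasDerivAt_cos x)
    have h3 := (Real.hasDerivAt_log (ne_of_gt hs)).comp x (Real.hasDerivAt_sin x)
    have := (h1.add h2).sub h3
    refine this.congr_deriv ?_
    rw [hg1]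
    simp only [one_div, div_eq_mul_inv]
    ring
  have hd2 : ∀ x ∈ S, HasDerivAt g1 (1 / Real.sin x ^ 2 - 1 / x ^ 2 - 1 / Real.cos x ^ 2) x := by
    intro x hx
    obtain ⟨hx0, hc, hs⟩ := hmem x hx
    have h1 : HasDerivAt (fun y : ℝ => 1 / y) (-(1 / x ^ 2)) x := by
      simpa [one_div] using hasDerivAt_inv (ne_of_gt hx0)
    have h2 := (Real.hasDerivAt_sin x).div (Real.hasDerivAt_cos x) (ne_of_gt hc)
    have h3 := (Real.hasDerivAt_cos x).div (Real.hasDerivAt_sin x) (ne_of_gt hs)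
    have hpy := Real.sin_sq_add_cos_sq x
    have e2 : Real.cos x * Real.cos x - Real.sin x * -Real.sin x = 1 := by nlinarith [hpy]
    have e3 : -Real.sin x * Real.sin x - Real.cos x * Real.cos x = -1 := by nlinarith [hpy]
    rw [e2] at h2
    rw [e3] at h3
    have := (h1.sub h2).sub h3
    refine this.congr_deriv ?_
    ring
  apply strictConcaveOn_of_deriv2_neg (convex_Ioo _ _)
  · apply ContinuousOn.log
    · exact (continuousOn_id.mul Real.continuousOn_cos).div Real.continuousOn_sin
        fun x hx => ne_of_gt (hmem x hx).2.2
    · intro x hx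
      obtain ⟨hx0, hc, hs⟩ := hmem x hx
      positivity
  · intro x hx
    rw [interior_Ioo] at hx
    obtain ⟨hx0, hc, hs⟩ := hmem x hx
    have hdf : Set.EqOn (deriv fun x : ℝ => Real.log (x * Real.cos x / Real.sin x)) g1 S := by
      intro y hy
      have : deriv (fun x : ℝ => Real.log (x * Real.cos x / Real.sin x)) y = deriv g y := by
        apply Filter.EventuallyEq.deriv_eq
        filter_upwards [hopen.mem_nhds hy] with z hz using hfg z hz
      rw [this, (hd1 y hy).deriv]
    have h2 : deriv (deriv fun x : ℝ => Real.log (x * Real.cos x / Real.sin x)) x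
        = 1 / Real.sin x ^ 2 - 1 / x ^ 2 - 1 / Real.cos x ^ 2 := by
      have : deriv (deriv fun x : ℝ => Real.log (x * Real.cos x / Real.sin x)) x = deriv g1 x := by
        apply Filter.EventuallyEq.deriv_eq
        filter_upwards [hopen.mem_nhds hx] with z hz using hdf hz
      rw [this, (hd2 x hx).deriv]
    show deriv^[2] _ x < 0
    rw [Function.iterate_succ, Function.iterate_one, Function.comp_apply, h2]
    -- the inequality
    have hkey := key_ineq (t := 2 * x) (by linarith [hx.1]) (by linarith [hx.2])
    rw [Real.cos_two_mul', Real.sin_two_mul] at hkey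
    have h1 : 1 / Real.sin x ^ 2 - 1 / x ^ 2 - 1 / Real.cos x ^ 2 < 0 := by
      rw [sub_sub, sub_neg, div_lt_iff₀ (by positivity)]
      have : (1 / x ^ 2 + 1 / Real.cos x ^ 2) * Real.sin x ^ 2
          = Real.sin x ^ 2 / x ^ 2 + Real.sin x ^ 2 / Real.cos x ^ 2 := by ring
      rw [this]
      rw [div_add_div _ _ (by positivity) (by positivity), lt_div_iff₀ (by positivity)]
      nlinarith
    exact h1
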